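/- Fix j ≥ 1 and let μ ≥ 2^{−j}. For any i ≥ j+1, let s_i be the sum of c_i = (6ℓ log n + 6 log log₂ n)·2^i i.i.d. random variables valued in [0,1] with mean μ. Then Pr[s_i/c_i > 2^{−i}] > 1 − n^{−ℓ·2^{i−j−1}}/log₂ n. -/

import Mathlib

open MeasureTheory ProbabilityTheory

/-- Lemma 8 of Tang–Xiao–Shi: with `μ ≥ 2^{-j}` and `i ≥ j+1`, if `s_i` is the sum of
`c_i = (6ℓ log n + 6 log log₂ n)·2^i` i.i.d. random variables valued in `[0,1]` with mean `μ`,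
then `Pr[s_i/c_i > 2^{-i}] > 1 - n^{-ℓ·2^{i-j-1}}/log₂ n`. -/
theorem kpt_estimation_late_stop_likely
    {Ω : Type*} [MeasureSpace Ω] [IsProbabilityMeasure (ℙ : Measure Ω)]
    (n : ℕ) (hn : 2 ≤ n) (ℓ : ℝ) (hℓ : 0 < ℓ)
    (j i : ℕ) (hj : 1 ≤ j) (hi : j + 1 ≤ i)
    (μ : ℝ) (hμ : (2:ℝ) ^ (-(j:ℝ)) ≤ μ)
    (c : ℕ) (hc : (c:ℝ) = (6 * ℓ * Real.log n + 6 * Real.log (Real.logb 2 n)) * 2 ^ i)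
    (X : Fin c → Ω → ℝ)
    (hmeas : ∀ a, Measurable (X a))
    (hindep : iIndepFun X ℙ)
    (hident : ∀ a b, IdentDistrib (X a) (X b) ℙ ℙ)
    (hbound : ∀ a ω, X a ω ∈ Set.Icc (0:ℝ) 1)
    (hmean : ∀ a, ∫ ω, X a ω ∂ℙ = μ) :
    1 - (n:ℝ) ^ (-(ℓ * 2 ^ (i - j - 1))) / Real.logb 2 n
      < (ℙ {ω | (2:ℝ) ^ (-(i:ℝ)) < (∑ a, X a ω) / c}).toReal := by
  have hn1 : (1:ℝ) < (n:ℝ) := by exact_mod_cast Nat.lt_of_lt_of_le one_lt_two hn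
  have hLogn : 0 < Real.log n := Real.log_pos hn1
  have hlogb1 : (1:ℝ) ≤ Real.logb 2 n := by
    have hlog : Real.log 2 ≤ Real.log n := by
      apply Real.log_le_log (by norm_num); exact_mod_cast hn
    rw [Real.logb, le_div_iff₀ (Real.log_pos one_lt_two)]; linarith
  have hlogbpos : 0 < Real.logb 2 n := lt_of_lt_of_le one_pos hlogb1
  have hM : 0 ≤ Real.log (Real.logb 2 n) := Real.log_nonneg hlogb1
  have hμpos : 0 < μ := lt_of_lt_of_le (Real.rpow_pos_of_pos two_pos _) hμ
  have hcpos : 0 < (c:ℝ) := by rw [hc]; positivity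
  set t : ℝ := -Real.log 2 with ht_def
  have ht : t ≤ 0 := neg_nonpos.mpr (Real.log_nonneg one_le_two)
  have hexpt : Real.exp t = 1/2 := by
    rw [ht_def, Real.exp_neg, Real.exp_log two_pos]; norm_num
  -- integrability of the exponentials
  have hint : ∀ a : Fin c, Integrable (fun ω => Real.exp (t * X a ω)) ℙ := by
    intro a
    refine (integrable_const (1:ℝ)).mono' (((hmeas a).const_mul t).exp.aestronglyMeasurable) ?_
    filter_upwards with ω
    rw [Real.norm_eq_abs, abs_of_pos (Real.exp_pos _)]
    rw [show (1:ℝ) = Real.exp 0 by simp]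
    exact Real.exp_le_exp.mpr (mul_nonpos_of_nonpos_of_nonneg ht (hbound a ω).1)
  have hintX : ∀ a : Fin c, Integrable (X a) ℙ := by
    intro a
    refine (integrable_const (1:ℝ)).mono' (hmeas a).aestronglyMeasurable ?_
    filter_upwards with ω
    rw [Real.norm_eq_abs, abs_of_nonneg (hbound a ω).1]; exact (hbound a ω).2
  -- mgf bound for each variable
  have hmgf : ∀ a : Fin c, mgf (X a) ℙ t ≤ Real.exp ((Real.exp t - 1) * μ) := by
    intro a
    have hpt : ∀ ω, Real.exp (t * X a ω) ≤ 1 + (Real.exp t - 1) * X a ω := by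
      intro ω
      obtain ⟨hx0, hx1⟩ := hbound a ω
      have := convexOn_exp.2 (Set.mem_univ (0:ℝ)) (Set.mem_univ t)
        (by linarith : (0:ℝ) ≤ 1 - X a ω) hx0 (by ring)
      simp only [smul_eq_mul, mul_zero, zero_add, Real.exp_zero] at this
      calc Real.exp (t * X a ω) = Real.exp (X a ω * t) := by rw [mul_comm]
        _ ≤ (1 - X a ω) * 1 + X a ω * Real.exp t := this
        _ = 1 + (Real.exp t - 1) * X a ω := by ring
    have h1 : mgf (X a) ℙ t ≤ 1 + (Real.exp t - 1) * μ := by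
      rw [mgf, ← hmean a]
      calc ∫ ω, Real.exp (t * X a ω) ∂ℙ ≤ ∫ ω, (1 + (Real.exp t - 1) * X a ω) ∂ℙ :=
            integral_mono (hint a) ((integrable_const 1).add ((hintX a).const_mul _)) hpt
        _ = 1 + (Real.exp t - 1) * ∫ ω, X a ω ∂ℙ := by
            rw [integral_add (integrable_const 1) ((hintX a).const_mul _),
              integral_const, integral_const_mul]
            simp
    calc mgf (X a) ℙ t ≤ 1 + (Real.exp t - 1) * μ := h1
      _ ≤ Real.exp ((Real.exp t - 1) * μ) := by
          have := Real.add_one_le_exp ((Real.exp t - 1) * μ); linarith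
  -- sum variable
  set S : Ω → ℝ := ∑ a, X a with hS_def
  have hSapp : ∀ ω, S ω = ∑ a, X a ω := by
    intro ω; simp [hS_def, Finset.sum_apply]
  have hSmeas : Measurable S := by
    rw [show S = fun ω => ∑ a, X a ω from funext hSapp]
    exact Finset.measurable_sum _ (fun a _ => hmeas a)
  have hintS : Integrable (fun ω => Real.exp (t * S ω)) ℙ := by
    refine (integrable_const (1:ℝ)).mono' ((hSmeas.const_mul t).exp.aestronglyMeasurable) ?_
    filter_upwards with ω
    rw [Real.norm_eq_abs, abs_of_pos (Real.exp_pos _), show (1:ℝ) = Real.exp 0 by simp]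
    refine Real.exp_le_exp.mpr (mul_nonpos_of_nonpos_of_nonneg ht ?_)
    rw [hSapp]; exact Finset.sum_nonneg fun a _ => (hbound a ω).1
  have hmgfS : mgf S ℙ t ≤ Real.exp ((c:ℝ) * ((Real.exp t - 1) * μ)) := by
    rw [hS_def, show (∑ a, X a) = ∑ a ∈ Finset.univ, X a from rfl,
      hindep.mgf_sum hmeas Finset.univ]
    calc ∏ a ∈ Finset.univ, mgf (X a) ℙ t
        ≤ ∏ _a ∈ (Finset.univ : Finset (Fin c)), Real.exp ((Real.exp t - 1) * μ) :=
          Finset.prod_le_prod (fun a _ => mgf_nonneg) (fun a _ => hmgf a)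
      _ = Real.exp ((c:ℝ) * ((Real.exp t - 1) * μ)) := by
          rw [Finset.prod_const, ← Real.exp_nat_mul]; simp
  -- Chernoff bound
  have hchern := measure_le_le_exp_mul_mgf (X := S) (μ := ℙ) ((2:ℝ) ^ (-(i:ℝ)) * c) ht hintS
  have hbd : (ℙ {ω | S ω ≤ (2:ℝ) ^ (-(i:ℝ)) * c}).toReal
      ≤ Real.exp ((c:ℝ) * ((2:ℝ) ^ (-(i:ℝ)) * Real.log 2 + (Real.exp t - 1) * μ)) := by
    refine hchern.trans ?_
    rw [show (c:ℝ) * ((2:ℝ) ^ (-(i:ℝ)) * Real.log 2 + (Real.exp t - 1) * μ)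
        = (-t * ((2:ℝ) ^ (-(i:ℝ)) * c)) + (c:ℝ) * ((Real.exp t - 1) * μ) by
      rw [ht_def]; ring, Real.exp_add]
    exact mul_le_mul_of_nonneg_left hmgfS (Real.exp_pos _).le
  -- numeric part
  have h2i : (2:ℝ) ^ (-(i:ℝ)) ≤ μ / 2 := by
    have : (2:ℝ) ^ (-(i:ℝ)) ≤ (2:ℝ) ^ (-(j:ℝ) - 1) := by
      apply Real.rpow_le_rpow_of_exponent_le one_le_two
      have : (j:ℝ) + 1 ≤ (i:ℝ) := by exact_mod_cast hi
      linarith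
    rw [Real.rpow_sub two_pos, Real.rpow_one] at this
    linarith [hμ]
  have hlog2 : Real.log 2 < 3/4 := lt_trans Real.log_two_lt_d9 (by norm_num)
  have hexp1 : (2:ℝ) ^ (-(i:ℝ)) * Real.log 2 + (Real.exp t - 1) * μ ≤ -μ/8 := by
    rw [hexpt]
    have h0 : (0:ℝ) ≤ (2:ℝ) ^ (-(i:ℝ)) := (Real.rpow_pos_of_pos two_pos _).le
    nlinarith [Real.log_nonneg (one_le_two (α := ℝ))]
  -- the key exponent inequality
  set k : ℕ := i - j - 1 with hk_def
  have hij : i - j = k + 1 := by omega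
  have h2jk : (2:ℝ)^i * (2:ℝ) ^ (-(j:ℝ)) = 2 * 2^k := by
    rw [Real.rpow_neg two_pos.le, Real.rpow_natCast, ← pow_sub₀ _ two_ne_zero (by omega : j ≤ i)]
    · rw [hij]; ring
  have hmain : (c:ℝ) * (-μ/8) < -(ℓ * 2 ^ k * Real.log n + Real.log (Real.logb 2 n)) := by
    have h1 : (c:ℝ) * (-μ/8) ≤ (c:ℝ) * (-(2:ℝ) ^ (-(j:ℝ))/8) := by
      apply mul_le_mul_of_nonneg_left _ hcpos.le
      linarith [hμ]
    refine lt_of_le_of_lt h1 ?_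
    rw [hc]
    have hrw : (6 * ℓ * Real.log n + 6 * Real.log (Real.logb 2 n)) * 2 ^ i
        * (-(2:ℝ) ^ (-(j:ℝ)) / 8)
        = -((6 * ℓ * Real.log n + 6 * Real.log (Real.logb 2 n)) * (2 * 2^k) / 8) := by
      rw [← h2jk]; ring
    rw [hrw, neg_lt_neg_iff]
    have h2k : (1:ℝ) ≤ 2^k := one_le_pow₀ (by norm_num)
    nlinarith [mul_pos hℓ hLogn, mul_le_mul_of_nonneg_right h2k hM,
      mul_le_mul_of_nonneg_right h2k (mul_pos hℓ hLogn).le]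
  have hq : Real.exp ((c:ℝ) * ((2:ℝ) ^ (-(i:ℝ)) * Real.log 2 + (Real.exp t - 1) * μ))
      < (n:ℝ) ^ (-(ℓ * 2 ^ (i - j - 1))) / Real.logb 2 n := by
    have hrhs : (n:ℝ) ^ (-(ℓ * 2 ^ (i - j - 1))) / Real.logb 2 n
        = Real.exp (-(ℓ * 2 ^ k * Real.log n + Real.log (Real.logb 2 n))) := by
      rw [Real.rpow_def_of_pos (by linarith : (0:ℝ) < (n:ℝ)), ← hk_def]
      rw [show -(ℓ * 2 ^ k * Real.log n + Real.log (Real.logb 2 n))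
          = -(ℓ * 2^k) * Real.log n - Real.log (Real.logb 2 n) by ring, Real.exp_sub,
        Real.exp_log hlogbpos]
      ring_nf
    rw [hrhs]
    apply Real.exp_lt_exp.mpr
    calc (c:ℝ) * ((2:ℝ) ^ (-(i:ℝ)) * Real.log 2 + (Real.exp t - 1) * μ)
        ≤ (c:ℝ) * (-μ/8) := mul_le_mul_of_nonneg_left hexp1 hcpos.le
      _ < _ := hmain
  -- complement argument
  set A : Set Ω := {ω | (2:ℝ) ^ (-(i:ℝ)) < (∑ a, X a ω) / c}
  have hAc : Aᶜ = {ω | S ω ≤ (2:ℝ) ^ (-(i:ℝ)) * c} := by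
    ext ω
    simp only [Set.mem_compl_iff, Set.mem_setOf_eq, not_lt, A, hSapp]
    rw [div_le_iff₀ hcpos, mul_comm ((2:ℝ) ^ (-(i:ℝ))) (c:ℝ)]
  have hAmeas : MeasurableSet A := by
    apply measurableSet_lt measurable_const
    exact (Finset.measurable_sum _ fun a _ => hmeas a).div_const _
  have hsplit : (ℙ A).toReal + (ℙ Aᶜ).toReal = 1 := by
    rw [← ENNReal.toReal_add (measure_ne_top _ _) (measure_ne_top _ _),
      measure_add_measure_compl hAmeas]
    simp
  have hAcbd : (ℙ Aᶜ).toReal < (n:ℝ) ^ (-(ℓ * 2 ^ (i - j - 1))) / Real.logb 2 n := by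
    rw [hAc]; exact lt_of_le_of_lt hbd hq
  linarith
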